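/- arXiv:2201.02186 — 2 statements merged into one kernel-verified Lean document; each statement's English description precedes it below -/
import Mathlib

section
/- Let f be a strongly nondegenerate self-concordant function on an open convex domain D_f ⊆ R_{>0}^n with gradient g. Then for all x, y ∈ D_f: f(y) − f(x) ≥ ⟨g(x) + 1/(n x), y − x⟩ + (1/n) Σ_i (log x_i − log y_i), where 1/(nx) denotes the vector with entries 1/(n x_i). -/
/-- Local quadratic form `v ↦ vᵀ H v` induced by a Hessian matrix `H`. -/
noncomputable def quadForm {n : ℕ} (H : Matrix (Fin n) (Fin n) ℝ) (v : Fin n → ℝ) : ℝ :=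
  dotProduct v (H.mulVec v)

lemma quadForm_smul {n : ℕ} (H : Matrix (Fin n) (Fin n) ℝ) (a : ℝ) (v : Fin n → ℝ) :
    quadForm H (a • v) = a ^ 2 * quadForm H v := by
  simp only [quadForm, Matrix.mulVec_smul, dotProduct_smul, smul_dotProduct,
    smul_eq_mul]
  ring

/-- log-like lower bound for a self-concordant function `f` with gradient
`g` on a domain contained in the positive orthant:
`f(y) − f(x) ≥ ⟨g(x) + 1/(nx), y − x⟩ + (1/n) Σᵢ (log xᵢ − log yᵢ)`. -/
theorem stmt2 (n : ℕ) (D : Set (Fin n → ℝ)) (f : (Fin n → ℝ) → ℝ)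
    (g : (Fin n → ℝ) → (Fin n → ℝ))
    (H : (Fin n → ℝ) → Matrix (Fin n) (Fin n) ℝ)
    (hopen : IsOpen D) (hconv : Convex ℝ D)
    (hDpos : ∀ x ∈ D, ∀ i, 0 < x i)
    (hf : ContDiffOn ℝ 2 f D)
    (hgrad : ∀ x ∈ D, ∀ v : Fin n → ℝ, fderiv ℝ f x v = dotProduct (g x) v)
    (hHess : ∀ x ∈ D, ∀ v w : Fin n → ℝ,
      fderiv ℝ (fun y => dotProduct (g y) v) x w = dotProduct v ((H x).mulVec w))
    (hposdef : ∀ x ∈ D, (H x).PosDef)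
    (hsc1 : ∀ x ∈ D, ∀ y : Fin n → ℝ, quadForm (H x) (y - x) < 1 → y ∈ D)
    (hsc2 : ∀ x ∈ D, ∀ y : Fin n → ℝ, quadForm (H x) (y - x) < 1 →
      ∀ v : Fin n → ℝ, v ≠ 0 →
        1 - Real.sqrt (quadForm (H x) (y - x)) ≤
            Real.sqrt (quadForm (H y) v) / Real.sqrt (quadForm (H x) v) ∧
        Real.sqrt (quadForm (H y) v) / Real.sqrt (quadForm (H x) v) ≤
            1 / (1 - Real.sqrt (quadForm (H x) (y - x)))) :
    ∀ x ∈ D, ∀ y ∈ D,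
      f y - f x ≥
        dotProduct (fun i => g x i + 1 / ((n : ℝ) * x i)) (y - x) +
          (1 / (n : ℝ)) * ∑ i, (Real.log (x i) - Real.log (y i)) := by
  -- positivity of the quadratic form
  have hqpos : ∀ z ∈ D, ∀ v : Fin n → ℝ, v ≠ 0 → 0 < quadForm (H z) v := by
    intro z hz v hv
    have := (hposdef z hz).dotProduct_mulVec_pos hv
    simpa [quadForm] using this
  have hq0 : ∀ z ∈ D, ∀ v : Fin n → ℝ, 0 ≤ quadForm (H z) v := by
    intro z hz v
    rcases eq_or_ne v 0 with rfl | hv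
    · simp [quadForm]
    · exact (hqpos z hz v hv).le
  -- per-coordinate Hessian lower bound
  have key : ∀ z ∈ D, ∀ v : Fin n → ℝ, ∀ i, (v i) ^ 2 ≤ quadForm (H z) v * (z i) ^ 2 := by
    intro z hz v i
    rcases eq_or_ne (v i) 0 with h0 | h0
    · have h1 := hq0 z hz v
      have h2 := hDpos z hz i
      nlinarith
    · have hvne : v ≠ 0 := fun h => h0 (by simp [h])
      have hq : 0 < quadForm (H z) v := hqpos z hz v hvne
      by_contra hcon
      push_neg at hcon
      set q := quadForm (H z) v with hqdef
      have hzi := hDpos z hz i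
      have habs : 0 < |v i| := abs_pos.mpr h0
      have hsq : 0 < Real.sqrt q := Real.sqrt_pos.mpr hq
      have hsqq : Real.sqrt q ^ 2 = q := Real.sq_sqrt hq.le
      -- z i * sqrt q < |v i|
      have hlt : z i * Real.sqrt q < |v i| := by
        apply lt_of_pow_lt_pow_left₀ 2 habs.le
        have : (z i * Real.sqrt q) ^ 2 = q * z i ^ 2 := by rw [mul_pow, hsqq]; ring
        rw [this, sq_abs]
        exact hcon
      have ht0 : z i / |v i| < 1 / Real.sqrt q := by
        rw [div_lt_div_iff₀ habs hsq]
        linarith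
      set t : ℝ := (z i / |v i| + 1 / Real.sqrt q) / 2 with htdef
      have ht1 : z i / |v i| < t := by rw [htdef]; linarith
      have ht2 : t < 1 / Real.sqrt q := by rw [htdef]; linarith
      have htpos : 0 < t := lt_of_le_of_lt (div_nonneg hzi.le habs.le) ht1
      -- vector with u i = -|v i| and same quadratic form
      set u : Fin n → ℝ := if 0 ≤ v i then (-1 : ℝ) • v else v with hudef
      have hui : u i = -|v i| := by
        rw [hudef]
        by_cases hc : 0 ≤ v i
        · simp [hc, abs_of_nonneg hc]
        · push_neg at hc
          simp [not_le.mpr hc, abs_of_neg hc]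
      have hqu : quadForm (H z) u = q := by
        rw [hudef]
        by_cases hcase : 0 ≤ v i
        · rw [if_pos hcase, quadForm_smul]
          norm_num
          exact hqdef.symm
        · rw [if_neg hcase]
      set w : Fin n → ℝ := z + t • u with hwdef
      have hwz : w - z = t • u := by rw [hwdef]; abel
      have hqw : quadForm (H z) (w - z) < 1 := by
        rw [hwz, quadForm_smul, hqu]
        have h3 : t * Real.sqrt q < 1 := (lt_div_iff₀ hsq).mp ht2
        nlinarith [mul_nonneg htpos.le hsq.le, hsqq, h3]
      have hwD : w ∈ D := hsc1 z hz w hqw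
      have hwi : 0 < w i := hDpos w hwD i
      have hwi' : w i = z i - t * |v i| := by
        rw [hwdef]
        simp [hui]
        ring
      rw [hwi'] at hwi
      have : z i < t * |v i| := by
        rw [div_lt_iff₀ habs] at ht1
        linarith
      linarith
  -- averaged Hessian lower bound
  have hessLB : ∀ z ∈ D, ∀ v : Fin n → ℝ,
      (1 / (n : ℝ)) * ∑ i, (v i / z i) ^ 2 ≤ quadForm (H z) v := by
    intro z hz v
    have hsum : ∑ i, (v i / z i) ^ 2 ≤ (n : ℝ) * quadForm (H z) v := by
      calc ∑ i, (v i / z i) ^ 2 ≤ ∑ _i : Fin n, quadForm (H z) v := by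
            apply Finset.sum_le_sum
            intro i _
            have hzi := hDpos z hz i
            rw [div_pow, div_le_iff₀ (by positivity)]
            exact key z hz v i
        _ = (n : ℝ) * quadForm (H z) v := by
            rw [Finset.sum_const, Finset.card_univ, Fintype.card_fin, nsmul_eq_mul]
    rcases Nat.eq_zero_or_pos n with hn | hn
    · subst hn
      simpa using hq0 z hz v
    · have hnpos : (0 : ℝ) < n := by exact_mod_cast hn
      rw [one_div, inv_mul_le_iff₀ hnpos]
      exact hsum
  intro x hx y hy
  set d : Fin n → ℝ := y - x with hd
  set c : ℝ → (Fin n → ℝ) := fun t => x + t • d with hcdef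
  have hcmem : ∀ t ∈ Set.Icc (0 : ℝ) 1, c t ∈ D := by
    intro t ht
    exact hconv.add_smul_sub_mem hx hy ht
  have hcd : ∀ t : ℝ, HasDerivAt c d t := by
    intro t
    exact (((hasDerivAt_id t).smul_const d).const_add x).congr_deriv (one_smul ℝ d)
  have hcpos : ∀ t ∈ Set.Icc (0 : ℝ) 1, ∀ i, 0 < c t i :=
    fun t ht i => hDpos _ (hcmem t ht) i
  have hci : ∀ t i, c t i = x i + t * d i := fun t i => rfl
  have hfd : DifferentiableOn ℝ f D := hf.differentiableOn two_ne_zero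
  -- first derivative of f ∘ c
  have hfder : ∀ t ∈ Set.Icc (0 : ℝ) 1,
      HasDerivAt (fun s => f (c s)) (fderiv ℝ f (c t) d) t := by
    intro t ht
    have h1 : DifferentiableAt ℝ f (c t) :=
      hfd.differentiableAt (hopen.mem_nhds (hcmem t ht))
    exact h1.hasFDerivAt.comp_hasDerivAt t (hcd t)
  -- second derivative via G
  set G : (Fin n → ℝ) → ℝ := fun z => fderiv ℝ f z d with hGdef
  have hG1 : ContDiffOn ℝ 1 G D :=
    (hf.fderiv_of_isOpen hopen (by norm_num)).clm_apply contDiffOn_const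
  have hGd : ∀ t ∈ Set.Icc (0 : ℝ) 1,
      HasDerivAt (fun s => G (c s)) (quadForm (H (c t)) d) t := by
    intro t ht
    have hz := hcmem t ht
    have hGa : DifferentiableAt ℝ G (c t) :=
      (hG1.differentiableOn one_ne_zero).differentiableAt (hopen.mem_nhds hz)
    have heq : G =ᶠ[nhds (c t)] (fun z => dotProduct (g z) d) :=
      Filter.eventuallyEq_of_mem (hopen.mem_nhds hz) (fun w hw => hgrad w hw d)
    have hfd2 : fderiv ℝ G (c t) d = quadForm (H (c t)) d := by
      rw [heq.fderiv_eq, hHess (c t) hz d d]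
      rfl
    have := hGa.hasFDerivAt.comp_hasDerivAt t (hcd t)
    rwa [hfd2] at this
  -- derivatives of the log part
  have hbase : ∀ (t : ℝ) (i : Fin n), HasDerivAt (fun s : ℝ => c s i) (d i) t := by
    intro t i
    have : HasDerivAt (fun s : ℝ => x i + s * d i) (d i) t := by
      simpa using ((hasDerivAt_id t).mul_const (d i)).const_add (x i)
    simpa [hci] using this
  have hLd : ∀ t ∈ Set.Icc (0 : ℝ) 1,
      HasDerivAt (fun s => ∑ i, Real.log (c s i)) (∑ i, d i / c t i) t := by
    intro t ht
    exact HasDerivAt.fun_sum fun i _ => (hbase t i).log (ne_of_gt (hcpos t ht i))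
  have hL2 : ∀ t ∈ Set.Icc (0 : ℝ) 1,
      HasDerivAt (fun s => ∑ i, d i / c s i) (∑ i, -((d i / c t i) ^ 2)) t := by
    intro t ht
    refine HasDerivAt.fun_sum fun i _ => ?_
    have hpos := hcpos t ht i
    have h1 := (hasDerivAt_const t (d i)).div (hbase t i) (ne_of_gt hpos)
    have h2 : -((d i / c t i) ^ 2) = ((0 : ℝ) * c t i - d i * d i) / c t i ^ 2 := by
      ring
    rw [h2]
    exact h1
  set h : ℝ → ℝ := fun t => f (c t) + (1 / (n : ℝ)) * ∑ i, Real.log (c t i) with hhdef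
  set h' : ℝ → ℝ := fun t => fderiv ℝ f (c t) d + (1 / (n : ℝ)) * ∑ i, d i / c t i with hh'def
  have hh : ∀ t ∈ Set.Icc (0 : ℝ) 1, HasDerivAt h (h' t) t :=
    fun t ht => (hfder t ht).add ((hLd t ht).const_mul _)
  have hh' : ∀ t ∈ Set.Icc (0 : ℝ) 1,
      HasDerivAt h' (quadForm (H (c t)) d + (1 / (n : ℝ)) * ∑ i, -((d i / c t i) ^ 2)) t :=
    fun t ht => (hGd t ht).add ((hL2 t ht).const_mul _)
  have hnonneg : ∀ t ∈ Set.Icc (0 : ℝ) 1,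
      0 ≤ quadForm (H (c t)) d + (1 / (n : ℝ)) * ∑ i, -((d i / c t i) ^ 2) := by
    intro t ht
    have := hessLB (c t) (hcmem t ht) d
    rw [Finset.sum_neg_distrib, mul_neg]
    linarith
  have hmono : MonotoneOn h' (Set.Icc 0 1) := by
    apply monotoneOn_of_deriv_nonneg (convex_Icc 0 1)
    · exact fun t ht => (hh' t ht).continuousAt.continuousWithinAt
    · intro t ht
      rw [interior_Icc] at ht
      exact (hh' t (Set.Ioo_subset_Icc_self ht)).differentiableAt.differentiableWithinAt
    · intro t ht
      rw [interior_Icc] at ht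
      rw [(hh' t (Set.Ioo_subset_Icc_self ht)).deriv]
      exact hnonneg t (Set.Ioo_subset_Icc_self ht)
  obtain ⟨ξ, hξ, hslope⟩ := exists_hasDerivAt_eq_slope h h' one_pos
    (fun t ht => (hh t ht).continuousAt.continuousWithinAt)
    (fun t ht => hh t (Set.Ioo_subset_Icc_self ht))
  have hmain : h' 0 ≤ h 1 - h 0 := by
    have h0ξ : h' 0 ≤ h' ξ :=
      hmono (Set.left_mem_Icc.mpr zero_le_one) (Set.Ioo_subset_Icc_self hξ) hξ.1.le
    rw [sub_zero, div_one] at hslope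
    linarith
  -- unfold endpoints
  have hc0 : c 0 = x := by simp [hcdef]
  have hc1 : c 1 = y := by simp [hcdef, hd]
  have hg0 : fderiv ℝ f x d = dotProduct (g x) d := hgrad x hx d
  rw [hhdef, hh'def] at hmain
  simp only [hc0, hc1] at hmain
  rw [hg0] at hmain
  rw [ge_iff_le]
  have hdot : dotProduct (fun i => g x i + 1 / ((n : ℝ) * x i)) (y - x)
      = dotProduct (g x) d + (1 / (n : ℝ)) * ∑ i, d i / x i := by
    simp only [dotProduct, hd, Pi.sub_apply, Finset.mul_sum]
    rw [← Finset.sum_add_distrib]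
    apply Finset.sum_congr rfl
    intro i _
    ring
  have hlog : ∑ i, (Real.log (x i) - Real.log (y i))
      = ∑ i, Real.log (x i) - ∑ i, Real.log (y i) := Finset.sum_sub_distrib _ _
  rw [hdot, hlog]
  linarith
end

section
/- Let K be a convex body in R^n, c ∈ R^n, and f a ϑ-self-concordant barrier on int K with gradient g. For η > 0 let C(η) be the minimizer of x ↦ η⟨c,x⟩ + f(x) over int K, and let val be the minimum of ⟨c,x⟩ over K. Then ⟨c, C(η)⟩ ≤ val + ϑ/η. -/
lemma quadForm_nonneg {n : ℕ} {M : Matrix (Fin n) (Fin n) ℝ} (hM : M.PosDef) (v : Fin n → ℝ) :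
    0 ≤ quadForm M v := by
  rcases eq_or_ne v 0 with h | h
  · simp [quadForm, h]
  · have := hM.dotProduct_mulVec_pos h
    simpa [quadForm] using this.le

lemma dot_mulVec_comm {n : ℕ} {M : Matrix (Fin n) (Fin n) ℝ} (hM : M.IsHermitian)
    (a b : Fin n → ℝ) : dotProduct a (M.mulVec b) = dotProduct b (M.mulVec a) := by
  rw [Matrix.dotProduct_mulVec, ← Matrix.mulVec_transpose, dotProduct_comm]
  have ht : M.transpose = M := by
    ext i j
    have := congrFun (congrFun hM.eq i) j
    simpa [Matrix.conjTranspose_apply] using this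
  rw [ht]

lemma cauchy_schwarz_pd {n : ℕ} {M : Matrix (Fin n) (Fin n) ℝ} (hM : M.PosDef)
    (a b : Fin n → ℝ) :
    (dotProduct a (M.mulVec b))^2 ≤ quadForm M a * quadForm M b := by
  set B := dotProduct a (M.mulVec b) with hB
  have key : ∀ t : ℝ, 0 ≤ quadForm M b * (t*t) + (-2*B) * t + quadForm M a := by
    intro t
    have h0 : 0 ≤ quadForm M (a - t • b) := quadForm_nonneg hM _
    have hsym : dotProduct b (M.mulVec a) = B := by
      rw [hB, dot_mulVec_comm hM.isHermitian]
    have expand : quadForm M (a - t • b)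
        = quadForm M b * (t*t) + (-2*B) * t + quadForm M a := by
      simp only [quadForm, Matrix.mulVec_sub, Matrix.mulVec_smul, sub_dotProduct,
        dotProduct_sub, smul_dotProduct, dotProduct_smul, smul_eq_mul,
        ← hB, ← hsym]
      ring
    linarith [expand ▸ h0]
  have hd := discrim_le_zero key
  simp only [discrim] at hd
  nlinarith [hd]

noncomputable def dotCLM {n : ℕ} (d : Fin n → ℝ) : (Fin n → ℝ) →L[ℝ] ℝ :=
  LinearMap.toContinuousLinearMap
    { toFun := fun y => dotProduct d y
      map_add' := fun u v => by simp [dotProduct_add]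
      map_smul' := fun r u => by simp [dotProduct_smul, smul_eq_mul] }

@[simp] lemma dotCLM_apply {n : ℕ} (d y : Fin n → ℝ) :
    dotCLM d y = dotProduct d y := rfl

lemma dotCLM_hasFDerivAt {n : ℕ} (d x : Fin n → ℝ) :
    HasFDerivAt (fun y : Fin n → ℝ => dotProduct d y) (dotCLM d) x :=
  (dotCLM d).hasFDerivAt

/-- value bound along the central path of a ϑ-self-concordant barrier over
a convex body `K`: `⟨c, C(η)⟩ ≤ val + ϑ/η`. -/
theorem stmt8 (n : ℕ) (K : Set (Fin n → ℝ)) (c : Fin n → ℝ) (f : (Fin n → ℝ) → ℝ)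
    (g : (Fin n → ℝ) → (Fin n → ℝ))
    (H : (Fin n → ℝ) → Matrix (Fin n) (Fin n) ℝ)
    (θ : ℝ)
    (hKcomp : IsCompact K) (hKconv : Convex ℝ K) (hKint : (interior K).Nonempty)
    (hf : ContDiffOn ℝ 2 f (interior K))
    (hgrad : ∀ x ∈ interior K, ∀ v : Fin n → ℝ,
      fderiv ℝ f x v = dotProduct (g x) v)
    (hHess : ∀ x ∈ interior K, ∀ v w : Fin n → ℝ,
      fderiv ℝ (fun y => dotProduct (g y) v) x w = dotProduct v ((H x).mulVec w))
    (hposdef : ∀ x ∈ interior K, (H x).PosDef)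
    (hsc1 : ∀ x ∈ interior K, ∀ y : Fin n → ℝ, quadForm (H x) (y - x) < 1 → y ∈ interior K)
    (hsc2 : ∀ x ∈ interior K, ∀ y : Fin n → ℝ, quadForm (H x) (y - x) < 1 →
      ∀ v : Fin n → ℝ, v ≠ 0 →
        1 - Real.sqrt (quadForm (H x) (y - x)) ≤
            Real.sqrt (quadForm (H y) v) / Real.sqrt (quadForm (H x) v) ∧
        Real.sqrt (quadForm (H y) v) / Real.sqrt (quadForm (H x) v) ≤
            1 / (1 - Real.sqrt (quadForm (H x) (y - x))))
    (hθ : ∀ x ∈ interior K, quadForm (H x) ((H x)⁻¹.mulVec (g x)) ≤ θ)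
    (C : ℝ → Fin n → ℝ)
    (hC : ∀ η : ℝ, 0 < η → C η ∈ interior K ∧
      ∀ y ∈ interior K,
        η * dotProduct c (C η) + f (C η) ≤ η * dotProduct c y + f y)
    (val : ℝ) (hval : IsLeast ((fun x => dotProduct c x) '' K) val) :
    ∀ η : ℝ, 0 < η → dotProduct c (C η) ≤ val + θ / η := by
  intro η hη
  obtain ⟨hz, hmin⟩ := hC η hη
  set z := C η with hzdef
  have hopen : IsOpen (interior K) := isOpen_interior
  obtain ⟨x0, hx0⟩ := hKint
  have hθ0 : 0 ≤ θ := le_trans (quadForm_nonneg (hposdef x0 hx0) _) (hθ x0 hx0)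
  -- differentiability of f and of y ↦ ⟨g y, v⟩ at interior points
  have hdiff_f : ∀ x ∈ interior K, DifferentiableAt ℝ f x := fun x hx =>
    (hf.contDiffAt (hopen.mem_nhds hx)).differentiableAt (by norm_num)
  have hdiff_g : ∀ x ∈ interior K, ∀ v : Fin n → ℝ,
      DifferentiableAt ℝ (fun y => dotProduct (g y) v) x := by
    intro x hx v
    have h1 : ContDiffAt ℝ 1 (fderiv ℝ f) x :=
      (hf.contDiffAt (hopen.mem_nhds hx)).fderiv_right (le_refl 2)
    have h2 : DifferentiableAt ℝ (fun y => fderiv ℝ f y v) x :=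
      (h1.differentiableAt one_ne_zero).clm_apply (differentiableAt_const v)
    refine h2.congr_of_eventuallyEq ?_
    filter_upwards [hopen.mem_nhds hx] with y hy
    exact (hgrad y hy v).symm
  -- first order condition
  have hfoc : ∀ v : Fin n → ℝ, dotProduct (g z) v = -(η * dotProduct c v) := by
    have hloc : IsLocalMin (fun y => η * dotProduct c y + f y) z := by
      filter_upwards [hopen.mem_nhds hz] with y hy using hmin y hy
    have hF : HasFDerivAt (fun y => η * dotProduct c y + f y)
        (η • dotCLM c + fderiv ℝ f z) z :=
      ((dotCLM_hasFDerivAt c z).const_mul η).add (hdiff_f z hz).hasFDerivAt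
    have h0 : (η • dotCLM c + fderiv ℝ f z) = 0 := by
      rw [← hF.fderiv]; exact hloc.fderiv_eq_zero
    intro v
    have := congrArg (fun L => L v) h0
    simp only [ContinuousLinearMap.add_apply, ContinuousLinearMap.smul_apply,
      ContinuousLinearMap.zero_apply, dotCLM_apply, smul_eq_mul, hgrad z hz v] at this
    linarith
  -- semiboundedness: ⟨g z, y - z⟩ ≤ θ for all y ∈ interior K
  have hsemi : ∀ y ∈ interior K, dotProduct (g z) (y - z) ≤ θ := by
    intro y hy
    set u := y - z with hu
    set φ : ℝ → ℝ := fun t => dotProduct (g (z + t • u)) u with hφdef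
    have hmem : ∀ t ∈ Set.Icc (0:ℝ) 1, z + t • u ∈ interior K := by
      intro t ht
      have h1 : (1 - t) • z + t • y ∈ interior K :=
        hKconv.interior hz hy (by linarith [ht.2]) ht.1 (by ring)
      have h2 : z + t • u = (1 - t) • z + t • y := by rw [hu]; module
      rwa [h2]
    have hline : ∀ t : ℝ, HasDerivAt (fun s : ℝ => z + s • u) u t := by
      intro t
      have h := ((hasDerivAt_id t).smul_const u).const_add z
      simpa using h
    have hphi : ∀ t : ℝ, z + t • u ∈ interior K →
        HasDerivAt φ (quadForm (H (z + t • u)) u) t := by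
      intro t hw
      have houter := (hdiff_g _ hw u).hasFDerivAt
      have hcomp := houter.comp_hasDerivAt t (hline t)
      have heq : fderiv ℝ (fun y => dotProduct (g y) u) (z + t • u) u
          = quadForm (H (z + t • u)) u := hHess _ hw u u
      rwa [heq] at hcomp
    have hkey : ∀ w ∈ interior K,
        (dotProduct (g w) u)^2 ≤ θ * quadForm (H w) u := by
      intro w hw
      have hpd := hposdef w hw
      set a := (H w)⁻¹.mulVec (g w) with ha
      have hga : (H w).mulVec a = g w := by
        rw [ha, Matrix.mulVec_mulVec,
          Matrix.mul_nonsing_inv _ ((Matrix.isUnit_iff_isUnit_det _).1 hpd.isUnit),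
          Matrix.one_mulVec]
      have h1 : dotProduct (g w) u = dotProduct u ((H w).mulVec a) := by
        rw [hga, dotProduct_comm]
      have hcs := cauchy_schwarz_pd hpd u a
      have h2 : quadForm (H w) a ≤ θ := hθ w hw
      have h3 : 0 ≤ quadForm (H w) u := quadForm_nonneg hpd u
      calc (dotProduct (g w) u)^2
          = (dotProduct u ((H w).mulVec a))^2 := by rw [h1]
        _ ≤ quadForm (H w) u * quadForm (H w) a := hcs
        _ ≤ θ * quadForm (H w) u := by nlinarith
    by_contra hcon
    push_neg at hcon
    have hφ0 : θ < φ 0 := by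
      have hz0 : z + (0:ℝ) • u = z := by simp
      simpa [hφdef, hz0] using hcon
    have hmono : MonotoneOn φ (Set.Icc (0:ℝ) 1) := by
      apply monotoneOn_of_deriv_nonneg (convex_Icc 0 1)
      · exact fun t ht => (hphi t (hmem t ht)).continuousAt.continuousWithinAt
      · intro t ht
        rw [interior_Icc] at ht
        exact (hphi t (hmem t ⟨ht.1.le, ht.2.le⟩)).differentiableAt.differentiableWithinAt
      · intro t ht
        rw [interior_Icc] at ht
        have hm := hmem t ⟨ht.1.le, ht.2.le⟩
        rw [(hphi t hm).deriv]
        exact quadForm_nonneg (hposdef _ hm) u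
    have hφpos : ∀ t ∈ Set.Icc (0:ℝ) 1, θ < φ t := by
      intro t ht
      have := hmono (Set.left_mem_Icc.2 zero_le_one) ht ht.1
      linarith
    set χ : ℝ → ℝ := fun t => θ / φ t + t with hχdef
    have hchi : ∀ t ∈ Set.Icc (0:ℝ) 1, HasDerivAt χ
        ((0 * φ t - θ * quadForm (H (z + t • u)) u) / (φ t)^2 + 1) t := by
      intro t ht
      have hm := hmem t ht
      have hne : φ t ≠ 0 := by have := hφpos t ht; linarith
      have hdiv := (hasDerivAt_const t θ).div (hphi t hm) hne
      have hid := hasDerivAt_id t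
      have := hdiv.add hid
      exact this
    have hchi' : ∀ t ∈ Set.Ioo (0:ℝ) 1, deriv χ t ≤ 0 := by
      intro t ht
      have htI : t ∈ Set.Icc (0:ℝ) 1 := ⟨ht.1.le, ht.2.le⟩
      have hm := hmem t htI
      rw [(hchi t htI).deriv]
      have hφt : 0 < φ t := lt_of_le_of_lt hθ0 (hφpos t htI)
      have hp2 : 0 < (φ t)^2 := pow_pos hφt 2
      have hk : (φ t)^2 ≤ θ * quadForm (H (z + t • u)) u := hkey _ hm
      have hd : (1:ℝ) ≤ θ * quadForm (H (z + t • u)) u / (φ t)^2 :=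
        (one_le_div hp2).2 hk
      have heq : (0 * φ t - θ * quadForm (H (z + t • u)) u) / (φ t)^2 + 1
          = 1 - θ * quadForm (H (z + t • u)) u / (φ t)^2 := by ring
      rw [heq]
      linarith
    have hanti : AntitoneOn χ (Set.Icc (0:ℝ) 1) := by
      apply antitoneOn_of_deriv_nonpos (convex_Icc 0 1)
      · exact fun t ht => (hchi t ht).continuousAt.continuousWithinAt
      · intro t ht
        rw [interior_Icc] at ht
        exact (hchi t ⟨ht.1.le, ht.2.le⟩).differentiableAt.differentiableWithinAt
      · intro t ht
        rw [interior_Icc] at ht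
        exact hchi' t ht
    have hcontr := hanti (Set.left_mem_Icc.2 zero_le_one) (Set.right_mem_Icc.2 zero_le_one)
      zero_le_one
    have hφ0pos : 0 < φ 0 := lt_of_le_of_lt hθ0 (hφpos 0 (Set.left_mem_Icc.2 zero_le_one))
    have hφ1pos : 0 < φ 1 := lt_of_le_of_lt hθ0 (hφpos 1 (Set.right_mem_Icc.2 zero_le_one))
    have h01 : θ / φ 0 < 1 := (div_lt_one hφ0pos).2 (hφpos 0 (Set.left_mem_Icc.2 zero_le_one))
    have h1nonneg : 0 ≤ θ / φ 1 := div_nonneg hθ0 hφ1pos.le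
    simp only [hχdef] at hcontr
    linarith
  -- conclusion
  obtain ⟨xs, hxsK, hxs⟩ := hval.1
  set A := dotProduct (g z) (xs - z) with hA
  have hAθ : A ≤ θ := by
    by_contra hcon
    push_neg at hcon
    have hApos : 0 < A := lt_of_le_of_lt hθ0 hcon
    set t := (θ + A) / (2 * A) with ht
    have ht0 : 0 < t := div_pos (by linarith) (by linarith)
    have ht1 : t < 1 := by rw [ht, div_lt_one (by linarith)]; linarith
    have hyt : z + t • (xs - z) ∈ interior K := by
      have hcombo := hKconv.combo_interior_closure_mem_interior hz (subset_closure hxsK)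
        (by linarith : (0:ℝ) < 1 - t) ht0.le (by ring)
      have h2 : z + t • (xs - z) = (1 - t) • z + t • xs := by module
      rwa [h2]
    have hsb := hsemi _ hyt
    have heq : (z + t • (xs - z)) - z = t • (xs - z) := by module
    rw [heq, dotProduct_smul, smul_eq_mul, ← hA] at hsb
    have htA : t * A = (θ + A) / 2 := by
      rw [ht]; field_simp
    rw [htA] at hsb
    linarith
  have hcval : dotProduct c (xs - z) = val - dotProduct c z := by
    have hxs' : dotProduct c xs = val := hxs
    rw [dotProduct_sub, hxs']
  have hAeq : A = -(η * (val - dotProduct c z)) := by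
    rw [hA, hfoc (xs - z), hcval]
  rw [hAeq] at hAθ
  have hfin : dotProduct c z - val ≤ θ / η := by
    rw [le_div_iff₀ hη]; linarith
  linarith
end
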